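/- Let L(T_{1,n,n}) = D − A be the combinatorial Laplacian matrix of the starlike tree T_{1,n,n} (equivalently, L = M_{T_{1,n,n}}(1)). Then lim_{n→∞} ρ(L(T_{1,n,n})) = (1/3)·(54 + 6√33)^{1/3} + 4/(54 + 6√33)^{1/3} + 2. -/

import Mathlib

open Filter Topology

/-- The deformed Laplacian matrix `M_G(s) = I - s·A + s²·(D - I)` of a finite simple graph. -/
noncomputable def defLap {V : Type*} [Fintype V] [DecidableEq V] (G : SimpleGraph V) (s : ℝ) :
    Matrix V V ℝ :=
  letI := Classical.decRel G.Adj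
  (1 : Matrix V V ℝ) - s • (G.adjMatrix ℝ) +
    s ^ 2 • (Matrix.diagonal (fun v => (G.degree v : ℝ)) - 1)

/-- The largest (real) eigenvalue of a matrix. -/
noncomputable def lamMax {V : Type*} [Fintype V] (M : Matrix V V ℝ) : ℝ :=
  sSup {μ : ℝ | ∃ v : V → ℝ, v ≠ 0 ∧ M.mulVec v = μ • v}


open Finset

variable {V : Type*} [Fintype V] [DecidableEq V]

omit [DecidableEq V] in
lemma degree_eq_sum (G : SimpleGraph V) [DecidableRel G.Adj] (i : V) :
    (G.degree i : ℝ) = ∑ j, if G.Adj i j then (1:ℝ) else 0 := by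
  rw [Finset.sum_boole, SimpleGraph.degree, SimpleGraph.neighborFinset_eq_filter]

lemma defLap_mulVec (G : SimpleGraph V) [inst : DecidableRel G.Adj] (v : V → ℝ) (i : V) :
    (defLap G 1).mulVec v i = ∑ j, if G.Adj i j then (v i - v j) else 0 := by
  rw [defLap]
  rw [Subsingleton.elim (Classical.decRel G.Adj) inst]
  rw [Matrix.add_mulVec, Matrix.sub_mulVec, Matrix.smul_mulVec, Matrix.smul_mulVec,
    Matrix.one_mulVec, Matrix.sub_mulVec, Matrix.one_mulVec]
  simp only [Pi.add_apply, Pi.sub_apply, Pi.smul_apply, smul_eq_mul, one_pow, one_mul,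
    Matrix.mulVec_diagonal]
  rw [SimpleGraph.adjMatrix_mulVec_apply]
  have h1 : ∑ j, (if G.Adj i j then (v i - v j) else 0)
      = (∑ j, if G.Adj i j then (1:ℝ) else 0) * v i - ∑ j, (if G.Adj i j then v j else 0) := by
    rw [Finset.sum_mul, ← Finset.sum_sub_distrib]
    refine Finset.sum_congr rfl fun j _ => ?_
    split <;> simp
  have h2 : ∑ j ∈ G.neighborFinset i, v j = ∑ j, (if G.Adj i j then v j else 0) := by
    rw [SimpleGraph.neighborFinset_eq_filter, Finset.sum_filter]
  rw [h1, ← degree_eq_sum, h2]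
  ring

lemma amgm (a b x y : ℝ) (hx : 0 < x) (hy : 0 < y) :
    -(a*b) ≤ (a^2*y/x + b^2*x/y)/2 := by
  have h : a^2*y/x + b^2*x/y = (a^2*y^2 + b^2*x^2)/(x*y) := by field_simp
  rw [h, div_div, le_div_iff₀ (by positivity)]
  nlinarith [sq_nonneg (a*y + b*x)]

lemma quadform_le (G : SimpleGraph V) [inst : DecidableRel G.Adj] (lam : ℝ) (w : V → ℝ)
    (hw : ∀ i, 0 < w i)
    (hsup : ∀ i, (∑ j, if G.Adj i j then (w i + w j) else 0) ≤ lam * w i) (v : V → ℝ) :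
    ∑ i, v i * (defLap G 1).mulVec v i ≤ lam * ∑ i, v i ^ 2 := by
  have expand : ∀ i, v i * (defLap G 1).mulVec v i
      = ∑ j, if G.Adj i j then v i * (v i - v j) else 0 := by
    intro i; rw [defLap_mulVec, Finset.mul_sum]
    refine Finset.sum_congr rfl fun j _ => ?_
    by_cases h : G.Adj i j <;> simp [h]
  calc ∑ i, v i * (defLap G 1).mulVec v i
      = ∑ i, ∑ j, (if G.Adj i j then v i * (v i - v j) else 0) :=
        Finset.sum_congr rfl fun i _ => expand i
    _ ≤ ∑ i, ∑ j, ((if G.Adj i j then v i^2 + (v i^2 * w j / w i)/2 else 0)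
          + (if G.Adj i j then (v j^2 * w i / w j)/2 else 0)) := by
        refine Finset.sum_le_sum fun i _ => Finset.sum_le_sum fun j _ => ?_
        by_cases h : G.Adj i j
        · simp only [if_pos h]
          have h2 := amgm (v i) (v j) (w i) (w j) (hw i) (hw j)
          nlinarith [h2]
        · simp [h]
    _ = ∑ i, ∑ j, (if G.Adj i j then v i^2 + (v i^2 * w j / w i)/2 else 0)
          + ∑ i, ∑ j, (if G.Adj i j then (v j^2 * w i / w j)/2 else 0) := by
        rw [← Finset.sum_add_distrib]
        exact Finset.sum_congr rfl fun i _ => Finset.sum_add_distrib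
    _ = ∑ i, ∑ j, (if G.Adj i j then v i^2 + (v i^2 * w j / w i)/2 else 0)
          + ∑ i, ∑ j, (if G.Adj i j then (v i^2 * w j / w i)/2 else 0) := by
        congr 1
        rw [Finset.sum_comm]
        refine Finset.sum_congr rfl fun x _ => Finset.sum_congr rfl fun y _ => ?_
        exact if_congr (G.adj_comm y x) rfl rfl
    _ = ∑ i, ∑ j, (if G.Adj i j then (v i^2 / w i) * (w i + w j) else 0) := by
        rw [← Finset.sum_add_distrib]
        refine Finset.sum_congr rfl fun i _ => ?_
        rw [← Finset.sum_add_distrib]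
        refine Finset.sum_congr rfl fun j _ => ?_
        by_cases h : G.Adj i j
        · have hne := (hw i).ne'
          simp only [if_pos h]
          field_simp
          ring
        · simp [h]
    _ ≤ ∑ i, lam * v i ^ 2 := by
        refine Finset.sum_le_sum fun i _ => ?_
        have e : ∑ j, (if G.Adj i j then (v i^2 / w i) * (w i + w j) else 0)
            = (v i^2 / w i) * ∑ j, (if G.Adj i j then (w i + w j) else 0) := by
          rw [Finset.mul_sum]
          refine Finset.sum_congr rfl fun j _ => ?_
          by_cases h : G.Adj i j <;> simp [h]
        rw [e]
        have h1 : (v i^2 / w i) * (∑ j, (if G.Adj i j then (w i + w j) else 0))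
            ≤ (v i^2 / w i) * (lam * w i) :=
          mul_le_mul_of_nonneg_left (hsup i) (div_nonneg (sq_nonneg _) (hw i).le)
        have h2 : (v i^2 / w i) * (lam * w i) = lam * v i ^ 2 := by
          have hne := (hw i).ne'
          field_simp
        linarith
    _ = lam * ∑ i, v i ^ 2 := by rw [Finset.mul_sum]

lemma sq_sum_pos {v : V → ℝ} (hv : v ≠ 0) : 0 < ∑ i, v i ^ 2 := by
  obtain ⟨i, hi⟩ := Function.ne_iff.mp hv
  exact Finset.sum_pos' (fun j _ => sq_nonneg _)
    ⟨i, Finset.mem_univ i, by simp only [Pi.zero_apply] at hi; positivity⟩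

lemma eig_le (G : SimpleGraph V) [inst : DecidableRel G.Adj] (lam : ℝ) (w : V → ℝ)
    (hw : ∀ i, 0 < w i)
    (hsup : ∀ i, (∑ j, if G.Adj i j then (w i + w j) else 0) ≤ lam * w i)
    {μ : ℝ} {v : V → ℝ} (hv : v ≠ 0) (he : (defLap G 1).mulVec v = μ • v) : μ ≤ lam := by
  have hq := quadform_le G lam w hw hsup v
  rw [he] at hq
  simp only [Pi.smul_apply, smul_eq_mul] at hq
  have e : ∑ i, v i * (μ * v i) = μ * ∑ i, v i ^ 2 := by
    rw [Finset.mul_sum]; exact Finset.sum_congr rfl fun i _ => by ring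
  rw [e] at hq
  exact le_of_mul_le_mul_right (by linarith) (sq_sum_pos hv)

lemma defLap_symm_entry (G : SimpleGraph V) (i j : V) : defLap G 1 i j = defLap G 1 j i := by
  letI := Classical.decRel G.Adj
  by_cases hij : i = j
  · subst hij; rfl
  · simp only [defLap, Matrix.add_apply, Matrix.sub_apply, Matrix.smul_apply,
      Matrix.one_apply, Matrix.diagonal_apply, SimpleGraph.adjMatrix_apply,
      hij, Ne.symm hij, if_false, smul_eq_mul]
    by_cases h : G.Adj i j
    · rw [if_pos h, if_pos (G.adj_symm h)]
    · rw [if_neg h, if_neg (fun h' => h (G.adj_symm h'))]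

lemma defLap_isHermitian (G : SimpleGraph V) : (defLap G 1).IsHermitian :=
  Matrix.ext fun i j => by
    rw [Matrix.conjTranspose_apply, star_trivial, defLap_symm_entry G j i]

lemma rayleigh_le_lamMax (G : SimpleGraph V) [inst : DecidableRel G.Adj] [Nonempty V]
    (lam : ℝ) (w : V → ℝ) (hw : ∀ i, 0 < w i)
    (hsup : ∀ i, (∑ j, if G.Adj i j then (w i + w j) else 0) ≤ lam * w i)
    (x : V → ℝ) (hx : x ≠ 0) :
    (∑ i, x i * (defLap G 1).mulVec x i) / (∑ i, x i ^ 2) ≤ lamMax (defLap G 1) := by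
  set M := defLap G 1 with hMdef
  have hM : M.IsHermitian := defLap_isHermitian G
  have hsym : (Matrix.toEuclideanLin M).IsSymmetric := Matrix.isHermitian_iff_isSymmetric.mp hM
  set T := Matrix.toEuclideanLin M with hTdef
  -- rayleigh quotients equal the mulVec form
  have key : ∀ y : EuclideanSpace ℝ V,
      RCLike.re (inner ℝ (T y) y : ℝ) / ‖y‖^2
        = (∑ i, (WithLp.equiv 2 (V → ℝ) y) i * M.mulVec (WithLp.equiv 2 (V → ℝ) y) i)
          / (∑ i, ((WithLp.equiv 2 (V → ℝ) y) i)^2) := by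
    intro y
    congr 1
    · rw [EuclideanSpace.norm_eq, Real.sq_sqrt (by positivity)]
      refine Finset.sum_congr rfl fun i _ => ?_
      rw [Real.norm_eq_abs, sq_abs]
      rfl
  have hbdd : ∀ y : {y : EuclideanSpace ℝ V // y ≠ 0},
      RCLike.re (inner ℝ (T y.1) y.1 : ℝ) / ‖(y.1 : EuclideanSpace ℝ V)‖^2 ≤ lam := by
    rintro ⟨y, hy⟩
    rw [key y]
    have hy' : (WithLp.equiv 2 (V → ℝ)) y ≠ 0 := by
      intro h
      exact hy ((WithLp.equiv 2 (V → ℝ)).injective (by simpa using h))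
    have hq := quadform_le G lam w hw hsup ((WithLp.equiv 2 (V → ℝ)) y)
    rw [div_le_iff₀ (sq_sum_pos hy')]
    exact hq
  set μ₀ : ℝ := ⨆ y : {y : EuclideanSpace ℝ V // y ≠ 0},
      RCLike.re (inner ℝ (T y.1) y.1 : ℝ) / ‖(y.1 : EuclideanSpace ℝ V)‖^2 with hmu
  have hEig : Module.End.HasEigenvalue T (μ₀ : ℝ) := by
    simpa [hmu] using hsym.hasEigenvalue_iSup_of_finiteDimensional
  obtain ⟨v, hveig⟩ := hEig.exists_hasEigenvector
  have hv1 : T v = μ₀ • v := hveig.apply_eq_smul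
  set v' := (WithLp.equiv 2 (V → ℝ)) v with hv'def
  have hv'0 : v' ≠ 0 := by
    intro h
    exact hveig.2 ((WithLp.equiv 2 (V → ℝ)).injective (by simpa [hv'def] using h))
  have hmv : M.mulVec v' = μ₀ • v' := by
    have h2 := congrArg (WithLp.equiv 2 (V → ℝ)) hv1
    simpa [hTdef, Matrix.ofLp_toEuclideanLin_apply, hv'def] using h2
  have bddS : BddAbove {μ : ℝ | ∃ u : V → ℝ, u ≠ 0 ∧ M.mulVec u = μ • u} := by
    refine ⟨lam, fun μ hμ => ?_⟩
    obtain ⟨u, hu0, hu⟩ := hμ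
    exact eig_le G lam w hw hsup hu0 hu
  have h1 : μ₀ ≤ lamMax M := le_csSup bddS ⟨v', hv'0, hmv⟩
  have hx' : ((WithLp.equiv 2 (V → ℝ)).symm x : EuclideanSpace ℝ V) ≠ 0 := by
    intro h
    apply hx
    have := congrArg (WithLp.equiv 2 (V → ℝ)) h
    simpa using this
  have h2 : (∑ i, x i * M.mulVec x i) / (∑ i, x i ^ 2) ≤ μ₀ := by
    have hbdd' : BddAbove (Set.range fun y : {y : EuclideanSpace ℝ V // y ≠ 0} =>
        RCLike.re (inner ℝ (T y.1) y.1 : ℝ) / ‖(y.1 : EuclideanSpace ℝ V)‖^2) := by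
      refine ⟨lam, fun z hz => ?_⟩
      obtain ⟨y, rfl⟩ := hz
      exact hbdd y
    have hle := le_ciSup hbdd' (⟨(WithLp.equiv 2 (V → ℝ)).symm x, hx'⟩ :
      {y : EuclideanSpace ℝ V // y ≠ 0})
    rw [key] at hle
    simpa [hmu] using hle
  exact le_trans h2 h1

/-- The starlike tree `T_{1,n,n}`: vertex `0` is the center, vertex `1` is a pendant vertex,
vertices `2,…,n+1` and `n+2,…,2n+1` form two pendant paths on `n` vertices each. -/
def T1nn (n : ℕ) : SimpleGraph (Fin (2 * n + 2)) :=
  SimpleGraph.fromRel (fun i j =>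
    ((i : ℕ) = 0 ∧ (j : ℕ) = 1) ∨
    ((i : ℕ) = 0 ∧ (j : ℕ) = 2) ∨
    ((i : ℕ) = 0 ∧ (j : ℕ) = n + 2) ∨
    (2 ≤ (i : ℕ) ∧ (i : ℕ) < n + 1 ∧ (j : ℕ) = (i : ℕ) + 1) ∨
    (n + 2 ≤ (i : ℕ) ∧ (i : ℕ) < 2 * n + 1 ∧ (j : ℕ) = (i : ℕ) + 1))

def Rrel (n a b : ℕ) : Prop :=
  (a = 0 ∧ b = 1) ∨ (a = 0 ∧ b = 2) ∨ (a = 0 ∧ b = n + 2) ∨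
    (2 ≤ a ∧ a < n + 1 ∧ b = a + 1) ∨ (n + 2 ≤ a ∧ a < 2 * n + 1 ∧ b = a + 1)

def Qn (n a b : ℕ) : Prop := a ≠ b ∧ (Rrel n a b ∨ Rrel n b a)

instance (n a b : ℕ) : Decidable (Rrel n a b) := by unfold Rrel; infer_instance
instance (n a b : ℕ) : Decidable (Qn n a b) := by unfold Qn; infer_instance

lemma t1nn_adj (n : ℕ) (i j : Fin (2*n+2)) :
    (T1nn n).Adj i j ↔ Qn n (i:ℕ) (j:ℕ) := by
  rw [T1nn, SimpleGraph.fromRel_adj, Qn, Rrel, Rrel, Ne, Fin.ext_iff]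

instance (n : ℕ) : DecidableRel (T1nn n).Adj :=
  fun i j => decidable_of_iff _ (t1nn_adj n i j).symm


lemma nbrSum (n : ℕ) (i : Fin (2*n+2)) (F : ℕ → ℝ) :
    (∑ j, if (T1nn n).Adj i j then F (j:ℕ) else 0)
      = ∑ k ∈ (Finset.range (2*n+2)).filter (Qn n (i:ℕ)), F k := by
  rw [Finset.sum_filter,
    ← Fin.sum_univ_eq_sum_range (fun k => if Qn n (i:ℕ) k then F k else 0) (2*n+2)]
  exact Finset.sum_congr rfl fun j _ => if_congr (t1nn_adj n i j) rfl rfl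

-- filter lemmas
lemma filt0 (n : ℕ) (hn : 1 ≤ n) :
    (Finset.range (2*n+2)).filter (Qn n 0) = {1, 2, n+2} := by
  ext k
  simp only [mem_filter, mem_range, mem_insert, mem_singleton, Qn, Rrel, true_and, and_true, ne_eq]
  omega

lemma filt1 (n : ℕ) (hn : 1 ≤ n) :
    (Finset.range (2*n+2)).filter (Qn n 1) = {0} := by
  ext k
  simp only [mem_filter, mem_range, mem_singleton, Qn, Rrel, true_and, and_true, ne_eq]
  omega

lemma filt2 (n : ℕ) (hn : 2 ≤ n) :
    (Finset.range (2*n+2)).filter (Qn n 2) = {0, 3} := by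
  ext k
  simp only [mem_filter, mem_range, mem_insert, mem_singleton, Qn, Rrel, true_and, and_true, ne_eq]
  omega

lemma filt_mid (n a : ℕ) (h3 : 3 ≤ a) (han : a ≤ n) :
    (Finset.range (2*n+2)).filter (Qn n a) = {a-1, a+1} := by
  ext k
  simp only [mem_filter, mem_range, mem_insert, mem_singleton, Qn, Rrel, true_and, and_true, ne_eq]
  omega

lemma filt_tip (n : ℕ) (hn : 2 ≤ n) :
    (Finset.range (2*n+2)).filter (Qn n (n+1)) = {n} := by
  ext k
  simp only [mem_filter, mem_range, mem_singleton, Qn, Rrel, true_and, and_true, ne_eq]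
  omega

lemma filt_n2 (n : ℕ) (hn : 2 ≤ n) :
    (Finset.range (2*n+2)).filter (Qn n (n+2)) = {0, n+3} := by
  ext k
  simp only [mem_filter, mem_range, mem_insert, mem_singleton, Qn, Rrel, true_and, and_true, ne_eq]
  omega

lemma filt_mid2 (n a : ℕ) (h3 : n+3 ≤ a) (han : a ≤ 2*n) :
    (Finset.range (2*n+2)).filter (Qn n a) = {a-1, a+1} := by
  ext k
  simp only [mem_filter, mem_range, mem_insert, mem_singleton, Qn, Rrel, true_and, and_true, ne_eq]
  omega

lemma filt_tip2 (n : ℕ) (hn : 2 ≤ n) :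
    (Finset.range (2*n+2)).filter (Qn n (2*n+1)) = {2*n} := by
  ext k
  simp only [mem_filter, mem_range, mem_singleton, Qn, Rrel, true_and, and_true, ne_eq]
  omega

lemma filt2_1 : (Finset.range (2*1+2)).filter (Qn 1 2) = {0} := by decide

lemma filt_n2_1 : (Finset.range (2*1+2)).filter (Qn 1 3) = {0} := by decide

-- ==== Part A : algebraic constants ====
noncomputable def cc : ℝ := (54 + 6 * Real.sqrt 33) ^ ((1:ℝ)/3)
noncomputable def lam : ℝ := 1 / 3 * cc + 4 / cc + 2
noncomputable def rr : ℝ := (lam^2 - 4*lam + 2) / (2*(lam - 1))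

lemma s33 : Real.sqrt 33 ^ 2 = 33 := Real.sq_sqrt (by norm_num)
lemma s33lb : 5 < Real.sqrt 33 := by nlinarith [s33, Real.sqrt_nonneg 33]
lemma s33ub : Real.sqrt 33 < 6 := by nlinarith [s33, Real.sqrt_nonneg 33]

lemma cc_pos : 0 < cc := Real.rpow_pos_of_pos (by nlinarith [Real.sqrt_nonneg 33]) _

lemma cc_cube : cc ^ 3 = 54 + 6 * Real.sqrt 33 := by
  have h : (0:ℝ) ≤ 54 + 6 * Real.sqrt 33 := by nlinarith [Real.sqrt_nonneg 33]
  rw [cc, ← Real.rpow_natCast (_ ^ _) 3, ← Real.rpow_mul h]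
  norm_num

lemma cc_lb : 4 < cc := by
  by_contra h
  push_neg at h
  have : cc ^ 3 ≤ 4 ^ 3 := pow_le_pow_left₀ cc_pos.le h 3
  nlinarith [cc_cube, s33lb]

lemma cc_ub : cc < 5 := by
  by_contra h
  push_neg at h
  have : (5:ℝ) ^ 3 ≤ cc ^ 3 := pow_le_pow_left₀ (by norm_num) h 3
  nlinarith [cc_cube, s33ub]

lemma lam_gt4 : 4 < lam := by
  have h := cc_pos
  have e : lam - 4 = ((cc-3)^2 + 3)/(3*cc) := by rw [lam]; field_simp; ring
  nlinarith [div_pos (by positivity : (0:ℝ) < (cc-3)^2+3) (by positivity : (0:ℝ) < 3*cc)]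

lemma lam_lt5 : lam < 5 := by
  have h := cc_pos
  have e : 5 - lam = (9*cc - cc^2 - 12)/(3*cc) := by rw [lam]; field_simp; ring
  have hn : 0 < 9*cc - cc^2 - 12 := by nlinarith [cc_lb, cc_ub]
  nlinarith [div_pos hn (by positivity : (0:ℝ) < 3*cc)]

lemma lam_cubic : lam^3 - 6*lam^2 + 8*lam - 4 = 0 := by
  have h := cc_pos
  rw [lam]
  field_simp
  linear_combination (cc^3 - 54 + 6*Real.sqrt 33) * cc_cube + 36 * s33

lemma lam1_pos : 0 < lam - 1 := by nlinarith [lam_gt4]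

lemma rr_pos : 0 < rr :=
  div_pos (by nlinarith [lam_gt4]) (by nlinarith [lam_gt4])

lemma rr_lt_one : rr < 1 := by
  rw [rr, div_lt_one (by nlinarith [lam_gt4])]
  nlinarith [lam_gt4, lam_lt5]

lemma lam1_rr : (lam-1)*rr = (lam^2 - 4*lam + 2)/2 := by
  have h := lam1_pos
  rw [rr]; field_simp

lemma rr_quad : rr^2 - (lam-2)*rr + 1 = 0 := by
  have h := lam1_pos
  rw [rr]
  field_simp
  linear_combination (-lam) * lam_cubic

lemma rr_tip : 1 ≤ (lam-1)*rr := by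
  rw [lam1_rr]; nlinarith [lam_gt4]

lemma center_eq : 3 + 2*rr + 1/(lam-1) = lam := by
  have h := lam1_pos
  rw [rr]
  field_simp
  ring

-- ==== Part C : the starlike tree vectors ====

open Finset

noncomputable def Wn (n k : ℕ) : ℝ :=
  if k = 0 then 1 else if k = 1 then 1/(lam-1)
  else if k ≤ n+1 then rr^(k-1) else rr^(k-(n+1))

noncomputable def Xn (n k : ℕ) : ℝ :=
  if k = 0 then 1 else if k = 1 then -(1/(lam-1))
  else if k ≤ n+1 then (-rr)^(k-1) else (-rr)^(k-(n+1))

lemma Wn0 (n : ℕ) : Wn n 0 = 1 := by simp [Wn]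
lemma Wn1 (n : ℕ) : Wn n 1 = 1/(lam-1) := by simp [Wn]
lemma WnP (n k : ℕ) (h2 : 2 ≤ k) (h : k ≤ n+1) : Wn n k = rr^(k-1) := by
  rw [Wn, if_neg (by omega), if_neg (by omega), if_pos h]
lemma WnR (n k : ℕ) (h : n+2 ≤ k) : Wn n k = rr^(k-(n+1)) := by
  rw [Wn, if_neg (by omega), if_neg (by omega), if_neg (by omega)]

lemma Xn0 (n : ℕ) : Xn n 0 = 1 := by simp [Xn]
lemma Xn1 (n : ℕ) : Xn n 1 = -(1/(lam-1)) := by simp [Xn]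
lemma XnP (n k : ℕ) (h2 : 2 ≤ k) (h : k ≤ n+1) : Xn n k = (-rr)^(k-1) := by
  rw [Xn, if_neg (by omega), if_neg (by omega), if_pos h]
lemma XnR (n k : ℕ) (h : n+2 ≤ k) : Xn n k = (-rr)^(k-(n+1)) := by
  rw [Xn, if_neg (by omega), if_neg (by omega), if_neg (by omega)]

lemma Wn_pos (n k : ℕ) : 0 < Wn n k := by
  have h1 := lam1_pos
  have h2 := rr_pos
  rw [Wn]
  split_ifs <;> positivity

lemma quad_eq (k : ℕ) : rr^k + 2*rr^(k+1) + rr^(k+2) = lam * rr^(k+1) := by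
  have h : rr^k + 2*rr^(k+1) + rr^(k+2) - lam * rr^(k+1)
      = rr^k * (rr^2 - (lam-2)*rr + 1) := by ring
  rw [rr_quad, mul_zero] at h
  linarith

lemma tip_ineq (m : ℕ) : rr^m + rr^(m+1) ≤ lam * rr^(m+1) := by
  have h : lam * rr^(m+1) - (rr^m + rr^(m+1)) = rr^m * ((lam-1)*rr - 1) := by ring
  have h2 : 0 ≤ rr^m * ((lam-1)*rr - 1) :=
    mul_nonneg (pow_nonneg rr_pos.le m) (by linarith [rr_tip])
  linarith

lemma hsupT (n : ℕ) (hn : 1 ≤ n) (i : Fin (2*n+2)) :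
    (∑ j, if (T1nn n).Adj i j then ((fun u : Fin (2*n+2) => Wn n (u:ℕ)) i
        + (fun u : Fin (2*n+2) => Wn n (u:ℕ)) j) else 0)
      ≤ lam * (fun u : Fin (2*n+2) => Wn n (u:ℕ)) i := by
  obtain ⟨a, ha⟩ := i
  simp only [Fin.val_mk]
  rw [nbrSum n ⟨a, ha⟩ (fun k => Wn n a + Wn n k)]
  simp only [Fin.val_mk]
  have hl1 := lam1_pos
  by_cases h0 : a = 0
  · subst h0
    rw [filt0 n hn, Finset.sum_insert (by simp only [Finset.mem_insert, Finset.mem_singleton]; omega),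
      Finset.sum_pair (by omega), Wn0, Wn1,
      WnP n 2 (by omega) (by omega), WnR n (n+2) (by omega),
      show (2:ℕ)-1 = 1 from rfl, show n+2-(n+1) = 1 from by omega, pow_one]
    linarith [center_eq]
  by_cases h1 : a = 1
  · subst h1
    rw [filt1 n hn, Finset.sum_singleton, Wn0, Wn1]
    apply le_of_eq
    field_simp
    ring
  by_cases hL : a ≤ n + 1
  -- left leg, 2 ≤ a ≤ n+1
  · by_cases htip : a = n + 1
    · by_cases hn1 : n = 1
      · subst hn1
        have ha2 : a = 2 := by omega
        subst ha2
        rw [filt2_1, Finset.sum_singleton, Wn0,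
          WnP 1 2 (by omega) (by omega), show (2:ℕ)-1 = 1 from rfl, pow_one]
        have := tip_ineq 0
        simp only [pow_zero, zero_add, pow_one] at this
        linarith
      · subst htip
        rw [filt_tip n (by omega), Finset.sum_singleton,
          WnP n (n+1) (by omega) (by omega), WnP n n (by omega) (by omega),
          Nat.add_sub_cancel]
        have := tip_ineq (n-1)
        rw [show n-1+1 = n from by omega] at this
        linarith
    · by_cases h2 : a = 2
      · subst h2
        have hn2 : 2 ≤ n := by omega
        rw [filt2 n hn2, Finset.sum_pair (by omega), Wn0,
          WnP n 2 (by omega) (by omega), WnP n 3 (by omega) (by omega),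
          show (2:ℕ)-1 = 1 from rfl, show (3:ℕ)-1 = 2 from rfl, pow_one]
        have := quad_eq 0
        simp only [pow_zero, zero_add, pow_one] at this
        linarith
      · -- 3 ≤ a ≤ n
        obtain ⟨k, rfl⟩ : ∃ k, a = k + 3 := ⟨a - 3, by omega⟩
        rw [filt_mid n (k+3) (by omega) (by omega), Finset.sum_pair (by omega),
          WnP n (k+3) (by omega) (by omega), WnP n (k+3-1) (by omega) (by omega),
          WnP n (k+3+1) (by omega) (by omega),
          show k+3-1-1 = k+1 from by omega, show k+3+1-1 = k+3 from by omega,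
          show k+3-1 = k+2 from by omega]
        have := quad_eq (k+1)
        rw [show k+1+1 = k+2 from rfl, show k+1+2 = k+3 from rfl] at this
        linarith
  -- right leg, n+2 ≤ a ≤ 2n+1
  · by_cases hrtip : a = 2*n + 1
    · by_cases hn1 : n = 1
      · subst hn1
        have ha3 : a = 3 := by omega
        subst ha3
        rw [filt_n2_1, Finset.sum_singleton, Wn0,
          WnR 1 3 (by omega), show 3-(1+1) = 1 from by omega, pow_one]
        have := tip_ineq 0
        simp only [pow_zero, zero_add, pow_one] at this
        linarith
      · subst hrtip
        rw [filt_tip2 n (by omega), Finset.sum_singleton,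
          WnR n (2*n+1) (by omega), WnR n (2*n) (by omega),
          show 2*n+1-(n+1) = n from by omega, show 2*n-(n+1) = n-1 from by omega]
        have := tip_ineq (n-1)
        rw [show n-1+1 = n from by omega] at this
        linarith
    · by_cases hm : a = n + 2
      · subst hm
        have hn2 : 2 ≤ n := by omega
        rw [filt_n2 n hn2, Finset.sum_pair (by omega), Wn0,
          WnR n (n+2) (by omega), WnR n (n+3) (by omega),
          show n+2-(n+1) = 1 from by omega, show n+3-(n+1) = 2 from by omega, pow_one]
        have := quad_eq 0
        simp only [pow_zero, zero_add, pow_one] at this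
        linarith
      · -- n+3 ≤ a ≤ 2n
        obtain ⟨k, rfl⟩ : ∃ k, a = n + 3 + k := ⟨a - (n+3), by omega⟩
        rw [filt_mid2 n (n+3+k) (by omega) (by omega), Finset.sum_pair (by omega),
          WnR n (n+3+k) (by omega), WnR n (n+3+k-1) (by omega),
          WnR n (n+3+k+1) (by omega),
          show n+3+k-(n+1) = k+2 from by omega, show n+3+k-1-(n+1) = k+1 from by omega,
          show n+3+k+1-(n+1) = k+3 from by omega]
        have := quad_eq (k+1)
        rw [show k+1+1 = k+2 from rfl, show k+1+2 = k+3 from rfl] at this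
        linarith

-- ==== Part D : the test vector and the squeeze ====

noncomputable def dd (n : ℕ) : ℝ := (-rr)^n - (-rr)^(n-1) - lam * (-rr)^n
noncomputable def ee (n : ℕ) : ℝ := rr^(2*n-1) * ((lam-1)*rr - 1)

lemma neg_quad : (-rr)^2 + (lam-2)*(-rr) + 1 = 0 := by linear_combination rr_quad

lemma LX (n : ℕ) (hn : 1 ≤ n) (i : Fin (2*n+2)) :
    (defLap (T1nn n) 1).mulVec (fun u : Fin (2*n+2) => Xn n (u:ℕ)) i
      = lam * Xn n (i:ℕ)
        + (if (i:ℕ) = n+1 then dd n else 0) + (if (i:ℕ) = 2*n+1 then dd n else 0) := by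
  rw [defLap_mulVec]
  obtain ⟨a, ha⟩ := i
  simp only [Fin.val_mk]
  rw [nbrSum n ⟨a, ha⟩ (fun k => Xn n a - Xn n k)]
  simp only [Fin.val_mk]
  have hl1 := lam1_pos
  by_cases h0 : a = 0
  · subst h0
    rw [if_neg (by omega), if_neg (by omega), filt0 n hn,
      Finset.sum_insert (by simp only [Finset.mem_insert, Finset.mem_singleton]; omega),
      Finset.sum_pair (by omega), Xn0, Xn1,
      XnP n 2 (by omega) (by omega), XnR n (n+2) (by omega),
      show (2:ℕ)-1 = 1 from rfl, show n+2-(n+1) = 1 from by omega, pow_one]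
    linarith [center_eq]
  by_cases h1 : a = 1
  · subst h1
    rw [if_neg (by omega), if_neg (by omega), filt1 n hn, Finset.sum_singleton, Xn0, Xn1]
    field_simp
    ring
  by_cases hL : a ≤ n + 1
  · by_cases htip : a = n + 1
    · by_cases hn1 : n = 1
      · subst hn1
        have ha2 : a = 2 := by omega
        subst ha2
        rw [if_pos rfl, if_neg (by omega), filt2_1, Finset.sum_singleton, Xn0,
          XnP 1 2 (by omega) (by omega), show (2:ℕ)-1 = 1 from rfl, dd]
        norm_num
      · subst htip
        rw [if_pos rfl, if_neg (by omega), filt_tip n (by omega), Finset.sum_singleton,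
          XnP n (n+1) (by omega) (by omega), XnP n n (by omega) (by omega),
          Nat.add_sub_cancel, dd]
        ring
    · by_cases h2 : a = 2
      · subst h2
        have hn2 : 2 ≤ n := by omega
        rw [if_neg (by omega), if_neg (by omega), filt2 n hn2, Finset.sum_pair (by omega),
          Xn0, XnP n 2 (by omega) (by omega), XnP n 3 (by omega) (by omega),
          show (2:ℕ)-1 = 1 from rfl, show (3:ℕ)-1 = 2 from rfl, pow_one]
        linear_combination (-1 : ℝ) * rr_quad
      · obtain ⟨k, rfl⟩ : ∃ k, a = k + 3 := ⟨a - 3, by omega⟩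
        rw [if_neg (by omega), if_neg (by omega), filt_mid n (k+3) (by omega) (by omega),
          Finset.sum_pair (by omega),
          XnP n (k+3) (by omega) (by omega), XnP n (k+3-1) (by omega) (by omega),
          XnP n (k+3+1) (by omega) (by omega),
          show k+3-1-1 = k+1 from by omega, show k+3+1-1 = k+3 from by omega,
          show k+3-1 = k+2 from by omega]
        linear_combination (-(-rr)^(k+1)) * neg_quad
  · by_cases hrtip : a = 2*n + 1
    · by_cases hn1 : n = 1
      · subst hn1
        have ha3 : a = 3 := by omega
        subst ha3
        rw [if_neg (by omega), if_pos rfl, filt_n2_1, Finset.sum_singleton, Xn0,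
          XnR 1 3 (by omega), show 3-(1+1) = 1 from by omega, dd]
        norm_num
      · subst hrtip
        rw [if_neg (by omega), if_pos rfl, filt_tip2 n (by omega), Finset.sum_singleton,
          XnR n (2*n+1) (by omega), XnR n (2*n) (by omega),
          show 2*n+1-(n+1) = n from by omega, show 2*n-(n+1) = n-1 from by omega, dd]
        ring
    · by_cases hm : a = n + 2
      · subst hm
        have hn2 : 2 ≤ n := by omega
        rw [if_neg (by omega), if_neg (by omega), filt_n2 n hn2, Finset.sum_pair (by omega),
          Xn0, XnR n (n+2) (by omega), XnR n (n+3) (by omega),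
          show n+2-(n+1) = 1 from by omega, show n+3-(n+1) = 2 from by omega, pow_one]
        linear_combination (-1 : ℝ) * rr_quad
      · obtain ⟨k, rfl⟩ : ∃ k, a = n + 3 + k := ⟨a - (n+3), by omega⟩
        rw [if_neg (by omega), if_neg (by omega),
          filt_mid2 n (n+3+k) (by omega) (by omega), Finset.sum_pair (by omega),
          XnR n (n+3+k) (by omega), XnR n (n+3+k-1) (by omega),
          XnR n (n+3+k+1) (by omega),
          show n+3+k-(n+1) = k+2 from by omega, show n+3+k-1-(n+1) = k+1 from by omega,
          show n+3+k+1-(n+1) = k+3 from by omega]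
        linear_combination (-(-rr)^(k+1)) * neg_quad

lemma x_dd (n : ℕ) (hn : 1 ≤ n) : Xn n (n+1) * dd n = -(ee n) := by
  obtain ⟨m, rfl⟩ : ∃ m, n = m+1 := ⟨n-1, by omega⟩
  rw [XnP _ _ (by omega) (by omega), Nat.add_sub_cancel, dd, ee, Nat.add_sub_cancel,
    show 2*(m+1)-1 = 2*m+1 from by omega]
  have e1 : (-rr)^(m+1) * (-rr)^(m+1) = rr^(2*m+1) * rr := by
    rw [← pow_add, show m+1+(m+1) = 2*m+1+1 from by ring, pow_succ,
      Odd.neg_pow ⟨m, by ring⟩, neg_mul_neg]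
  have e2 : (-rr)^(m+1) * (-rr)^m = -(rr^(2*m+1)) := by
    rw [← pow_add, show m+1+m = 2*m+1 from by omega, Odd.neg_pow ⟨m, by ring⟩]
  have expand : (-rr)^(m+1) * ((-rr)^(m+1) - (-rr)^m - lam*(-rr)^(m+1))
      = (-rr)^(m+1)*(-rr)^(m+1) - (-rr)^(m+1)*(-rr)^m
        - lam*((-rr)^(m+1)*(-rr)^(m+1)) := by ring
  rw [expand, e1, e2]
  ring

lemma S1_eq (n : ℕ) (hn : 1 ≤ n) :
    ∑ i : Fin (2*n+2), (fun u : Fin (2*n+2) => Xn n (u:ℕ)) i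
        * (defLap (T1nn n) 1).mulVec (fun u : Fin (2*n+2) => Xn n (u:ℕ)) i
      = lam * (∑ i : Fin (2*n+2), (Xn n (i:ℕ))^2) - 2*(ee n) := by
  have h1 : ∀ i : Fin (2*n+2), (fun u : Fin (2*n+2) => Xn n (u:ℕ)) i
        * (defLap (T1nn n) 1).mulVec (fun u : Fin (2*n+2) => Xn n (u:ℕ)) i
      = lam * (Xn n (i:ℕ))^2 + ((if (i:ℕ) = n+1 then Xn n (i:ℕ) * dd n else 0)
        + (if (i:ℕ) = 2*n+1 then Xn n (i:ℕ) * dd n else 0)) := by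
    intro i
    rw [LX n hn i]
    simp only
    split_ifs <;> ring
  rw [Finset.sum_congr rfl (fun i _ => h1 i), Finset.sum_add_distrib,
    Finset.sum_add_distrib, ← Finset.mul_sum]
  have h2 : (∑ i : Fin (2*n+2), if (i:ℕ) = n+1 then Xn n (i:ℕ) * dd n else 0) = -(ee n) := by
    rw [Fin.sum_univ_eq_sum_range (fun k => if k = n+1 then Xn n k * dd n else 0) (2*n+2),
      Finset.sum_ite_eq' (Finset.range (2*n+2)) (n+1) (fun k => Xn n k * dd n),
      if_pos (Finset.mem_range.mpr (by omega))]
    exact x_dd n hn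
  have h3 : (∑ i : Fin (2*n+2), if (i:ℕ) = 2*n+1 then Xn n (i:ℕ) * dd n else 0) = -(ee n) := by
    rw [Fin.sum_univ_eq_sum_range (fun k => if k = 2*n+1 then Xn n k * dd n else 0) (2*n+2),
      Finset.sum_ite_eq' (Finset.range (2*n+2)) (2*n+1) (fun k => Xn n k * dd n),
      if_pos (Finset.mem_range.mpr (by omega))]
    rw [show Xn n (2*n+1) = Xn n (n+1) from by
      rcases Nat.lt_or_ge n 2 with h | h
      · interval_cases n
        rfl
      · rw [XnR n (2*n+1) (by omega), XnP n (n+1) (by omega) (by omega),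
          Nat.add_sub_cancel, show 2*n+1-(n+1) = n from by omega]]
    exact x_dd n hn
  rw [h2, h3]
  ring

lemma S2_ge (n : ℕ) : 1 ≤ ∑ i : Fin (2*n+2), (Xn n (i:ℕ))^2 := by
  have h := Finset.single_le_sum (f := fun i : Fin (2*n+2) => (Xn n (i:ℕ))^2)
    (fun i _ => sq_nonneg _) (Finset.mem_univ ⟨0, by omega⟩)
  simpa [Xn0] using h

lemma xv_ne (n : ℕ) : (fun u : Fin (2*n+2) => Xn n (u:ℕ)) ≠ 0 := by
  intro h
  have h2 := congrFun h ⟨0, by omega⟩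
  simp [Xn0] at h2

lemma ee_nonneg (n : ℕ) : 0 ≤ ee n :=
  mul_nonneg (pow_nonneg rr_pos.le _) (by linarith [rr_tip])

lemma ee_le (n : ℕ) (hn : 1 ≤ n) : ee n ≤ lam * rr^n := by
  rw [ee, mul_comm lam (rr^n)]
  apply mul_le_mul
  · exact pow_le_pow_of_le_one rr_pos.le rr_lt_one.le (by omega)
  · nlinarith [rr_pos, rr_lt_one, lam_gt4]
  · linarith [rr_tip]
  · exact pow_nonneg rr_pos.le n

lemma lamMax_lower (n : ℕ) (hn : 1 ≤ n) :
    lam - 2*lam*rr^n ≤ lamMax (defLap (T1nn n) 1) := by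
  have hray := rayleigh_le_lamMax (T1nn n) lam (fun u : Fin (2*n+2) => Wn n (u:ℕ))
    (fun i => Wn_pos n _) (hsupT n hn) (fun u : Fin (2*n+2) => Xn n (u:ℕ)) (xv_ne n)
  refine le_trans ?_ hray
  rw [S1_eq n hn]
  have hS1 : 1 ≤ ∑ i : Fin (2*n+2), (Xn n (i:ℕ))^2 := S2_ge n
  rw [le_div_iff₀ (by linarith)]
  have h1 := ee_nonneg n
  have h2 := ee_le n hn
  have hrn : 0 ≤ rr^n := pow_nonneg rr_pos.le n
  have hlam : (0:ℝ) ≤ lam := by linarith [lam_gt4]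
  nlinarith [mul_nonneg (mul_nonneg hlam hrn)
    (by linarith : (0:ℝ) ≤ (∑ i : Fin (2*n+2), (Xn n (i:ℕ))^2) - 1)]

lemma lamMax_upper (n : ℕ) (hn : 1 ≤ n) : lamMax (defLap (T1nn n) 1) ≤ lam := by
  rw [lamMax]
  apply Real.sSup_le
  · rintro μ ⟨v, hv, he⟩
    exact eig_le (T1nn n) lam (fun u : Fin (2*n+2) => Wn n (u:ℕ))
      (fun i => Wn_pos n _) (hsupT n hn) hv he
  · linarith [lam_gt4]


/-- the spectral radii of the combinatorial Laplacians `L = M_{T_{1,n,n}}(1)`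
of the starlike trees `T_{1,n,n}` converge, as `n → ∞`, to
`(1/3)·(54 + 6√33)^{1/3} + 4/(54 + 6√33)^{1/3} + 2`. -/
theorem stmt4 :
    Filter.Tendsto (fun n : ℕ => lamMax (defLap (T1nn n) 1)) Filter.atTop
      (nhds ((1 / 3) * (54 + 6 * Real.sqrt 33) ^ ((1 : ℝ) / 3) +
        4 / (54 + 6 * Real.sqrt 33) ^ ((1 : ℝ) / 3) + 2)) := by
  have heq : ((1 / 3) * (54 + 6 * Real.sqrt 33) ^ ((1 : ℝ) / 3) +
      4 / (54 + 6 * Real.sqrt 33) ^ ((1 : ℝ) / 3) + 2) = lam := rfl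
  rw [heq]
  have hlow : Filter.Tendsto (fun n : ℕ => lam - 2*lam*rr^n) Filter.atTop (nhds lam) := by
    have h0 : Filter.Tendsto (fun n : ℕ => rr^n) Filter.atTop (nhds 0) :=
      tendsto_pow_atTop_nhds_zero_of_lt_one rr_pos.le rr_lt_one
    have h1 := h0.const_mul (2*lam)
    have h2 := Filter.Tendsto.sub
      (tendsto_const_nhds : Filter.Tendsto (fun _ : ℕ => lam) Filter.atTop (nhds lam)) h1
    simpa using h2
  refine tendsto_of_tendsto_of_tendsto_of_le_of_le' hlow tendsto_const_nhds ?_ ?_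
  · filter_upwards [Filter.eventually_ge_atTop 1] with n hn
    exact lamMax_lower n hn
  · filter_upwards [Filter.eventually_ge_atTop 1] with n hn
    exact lamMax_upper n hn
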